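/- For the local log-linear model f(t,θ,β) = θ·exp{β(t−x)} with kernel K, the kernel-smoothed local log-likelihood evaluates to n h f_n(x) k_0^{−1} log θ − n h θ ψ(βh)/k_0 + β n h³ g_n(x)/k_0 (up to terms not depending on (θ,β)), where ψ(u) = ∫K(z)e^{uz}dz; consequently, given β, the posterior of θ under a Gamma(c f_0(x), c) prior is Gamma(c f_0(x) + n h f_n(x)/k_0, c + n h ψ(βh)/k_0). -/

import Mathlib

open Finset MeasureTheory

/-- The Gamma(α, β) density. -/
noncomputable def gammaPdf (α β θ : ℝ) : ℝ :=
  β ^ α / Real.Gamma α * θ ^ (α - 1) * Real.exp (-β * θ)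

/-- For the local log-linear model `f(t,θ,β) = θ·e^{β(t-x)}` with kernel `K`,
the kernel-smoothed local log-likelihood equals
`nhfₙ(x)k₀⁻¹ log θ - nhθψ(βh)/k₀ + βnh³gₙ(x)/k₀` with `ψ(u) = ∫K(z)e^{uz}dz`;
consequently, given `β`, the posterior of `θ` under a `Γ(c·f₀(x), c)` prior is
`Γ(c·f₀(x) + nhfₙ(x)/k₀, c + nhψ(βh)/k₀)`. -/
theorem local_loglinear_likelihood_and_posterior (n : ℕ) (hn : 0 < n)
    (x : Fin n → ℝ) (x0 h θ β c f0x : ℝ) (K : ℝ → ℝ)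
    (hh : 0 < h) (hθ : 0 < θ) (hc : 0 < c) (hf0 : 0 < f0x)
    (hKmeas : Measurable K) (hKpos : ∀ z, 0 ≤ K z) (hk0 : 0 < K 0)
    (hKint : Integrable (fun z => K z * Real.exp (β * h * z)))
    (hψ : 0 < ∫ z, K z * Real.exp (β * h * z)) :
    Real.log
        ((∏ i, (θ * Real.exp (β * (x i - x0))) ^ (K (h⁻¹ * (x i - x0)) / K 0)) *
          Real.exp (-(n : ℝ) *
            ∫ t, (K (h⁻¹ * (t - x0)) / K 0) * (θ * Real.exp (β * (t - x0)))))
      = (n : ℝ) * h * ((n : ℝ)⁻¹ * ∑ i, h⁻¹ * K (h⁻¹ * (x i - x0))) / K 0 * Real.log θ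
        - (n : ℝ) * h * θ * (∫ z, K z * Real.exp (β * h * z)) / K 0
        + β * (n : ℝ) * h ^ 3 *
            ((n : ℝ)⁻¹ * ∑ i, h⁻¹ ^ 3 * (x i - x0) * K (h⁻¹ * (x i - x0))) / K 0
    ∧ ∃ C > 0, ∀ θ' : ℝ, 0 < θ' →
        gammaPdf (c * f0x) c θ' *
            (θ' ^ ((n : ℝ) * h * ((n : ℝ)⁻¹ * ∑ i, h⁻¹ * K (h⁻¹ * (x i - x0))) / K 0) *
              Real.exp (-((n : ℝ) * h * (∫ z, K z * Real.exp (β * h * z)) / K 0) * θ'))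
          = C * gammaPdf
              (c * f0x + (n : ℝ) * h * ((n : ℝ)⁻¹ * ∑ i, h⁻¹ * K (h⁻¹ * (x i - x0))) / K 0)
              (c + (n : ℝ) * h * (∫ z, K z * Real.exp (β * h * z)) / K 0) θ' := by
  have hn' : (n : ℝ) ≠ 0 := Nat.cast_ne_zero.mpr hn.ne'
  have hh' : h ≠ 0 := hh.ne'
  have hk0' : K 0 ≠ 0 := hk0.ne'
  set ψ : ℝ := ∫ z, K z * Real.exp (β * h * z) with hψdef
  set S1 : ℝ := ∑ i, K (h⁻¹ * (x i - x0)) with hS1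
  set S2 : ℝ := ∑ i, (x i - x0) * K (h⁻¹ * (x i - x0)) with hS2
  -- integral computation
  have hint : (∫ t, (K (h⁻¹ * (t - x0)) / K 0) * (θ * Real.exp (β * (t - x0))))
      = h * θ * ψ / K 0 := by
    have heq : (fun t => (K (h⁻¹ * (t - x0)) / K 0) * (θ * Real.exp (β * (t - x0))))
        = fun t => (θ / K 0) * ((fun z => K z * Real.exp (β * h * z)) (h⁻¹ * (t - x0))) := by
      funext t
      simp only
      rw [show β * h * (h⁻¹ * (t - x0)) = β * (t - x0) by field_simp]
      ring
    rw [heq, integral_const_mul]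
    have h1 : (∫ t, (fun z => K z * Real.exp (β * h * z)) (h⁻¹ * (t - x0)))
        = ∫ t, (fun u => (fun z => K z * Real.exp (β * h * z)) (h⁻¹ * u)) (t - x0) := rfl
    rw [h1,
      integral_sub_right_eq_self (fun u => (fun z => K z * Real.exp (β * h * z)) (h⁻¹ * u)) x0,
      MeasureTheory.Measure.integral_comp_mul_left (fun z => K z * Real.exp (β * h * z)) h⁻¹,
      inv_inv, abs_of_pos hh, smul_eq_mul]
    field_simp
    rw [hψdef]; simp only [mul_comm h β]
  -- sums
  have hsum1 : (∑ i, h⁻¹ * K (h⁻¹ * (x i - x0))) = h⁻¹ * S1 := by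
    rw [hS1, Finset.mul_sum]
  have hsum2 : (∑ i, h⁻¹ ^ 3 * (x i - x0) * K (h⁻¹ * (x i - x0))) = h⁻¹ ^ 3 * S2 := by
    rw [hS2, Finset.mul_sum]; exact Finset.sum_congr rfl fun i _ => by ring
  have hA : (n : ℝ) * h * ((n : ℝ)⁻¹ * ∑ i, h⁻¹ * K (h⁻¹ * (x i - x0))) / K 0 = S1 / K 0 := by
    rw [hsum1]; field_simp
  constructor
  · -- log-likelihood
    have hprodpos : ∀ i ∈ Finset.univ (α := Fin n),
        (θ * Real.exp (β * (x i - x0))) ^ (K (h⁻¹ * (x i - x0)) / K 0) ≠ 0 := by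
      intro i _
      exact (Real.rpow_pos_of_pos (mul_pos hθ (Real.exp_pos _)) _).ne'
    rw [Real.log_mul (Finset.prod_ne_zero_iff.mpr hprodpos) (Real.exp_ne_zero _),
      Real.log_exp, Real.log_prod hprodpos]
    have hlog : ∀ i : Fin n,
        Real.log ((θ * Real.exp (β * (x i - x0))) ^ (K (h⁻¹ * (x i - x0)) / K 0))
        = (Real.log θ / K 0) * K (h⁻¹ * (x i - x0))
          + (β / K 0) * ((x i - x0) * K (h⁻¹ * (x i - x0))) := by
      intro i
      rw [Real.log_rpow (mul_pos hθ (Real.exp_pos _)),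
        Real.log_mul hθ.ne' (Real.exp_ne_zero _), Real.log_exp]
      ring
    rw [Finset.sum_congr rfl (fun i _ => hlog i), Finset.sum_add_distrib,
      ← Finset.mul_sum, ← Finset.mul_sum, ← hS1, ← hS2, hint, hsum1, hsum2]
    field_simp
    ring
  · -- posterior
    set A : ℝ := (n : ℝ) * h * ((n : ℝ)⁻¹ * ∑ i, h⁻¹ * K (h⁻¹ * (x i - x0))) / K 0 with hAdef
    set B : ℝ := (n : ℝ) * h * ψ / K 0 with hBdef
    have hApos : 0 ≤ A := by
      rw [hA, hS1]
      exact div_nonneg (Finset.sum_nonneg fun i _ => hKpos _) hk0.le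
    have hBpos : 0 < B := by
      rw [hBdef]
      exact div_pos (mul_pos (mul_pos (by exact_mod_cast hn) hh) hψ) hk0
    have hcB : 0 < c + B := by linarith
    have hcfA : 0 < c * f0x + A := by nlinarith
    have hΓ1 : 0 < Real.Gamma (c * f0x) := Real.Gamma_pos_of_pos (mul_pos hc hf0)
    have hΓ2 : 0 < Real.Gamma (c * f0x + A) := Real.Gamma_pos_of_pos hcfA
    refine ⟨c ^ (c * f0x) / Real.Gamma (c * f0x)
      * (Real.Gamma (c * f0x + A) / (c + B) ^ (c * f0x + A)), ?_, ?_⟩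
    · exact mul_pos (div_pos (Real.rpow_pos_of_pos hc _) hΓ1)
        (div_pos hΓ2 (Real.rpow_pos_of_pos hcB _))
    · intro θ' hθ'
      unfold gammaPdf
      have e1 : θ' ^ (c * f0x - 1) * θ' ^ A = θ' ^ (c * f0x + A - 1) := by
        rw [← Real.rpow_add hθ']; congr 1; ring
      have e2 : Real.exp (-c * θ') * Real.exp (-B * θ') = Real.exp (-(c + B) * θ') := by
        rw [← Real.exp_add]; congr 1; ring
      have hone : (c + B) ^ (c * f0x + A) / Real.Gamma (c * f0x + A) *
          (Real.Gamma (c * f0x + A) / (c + B) ^ (c * f0x + A)) = 1 := by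
        rw [div_mul_div_comm, mul_comm ((c + B) ^ (c * f0x + A)) (Real.Gamma (c * f0x + A))]
        exact div_self (mul_pos hΓ2 (Real.rpow_pos_of_pos hcB _)).ne'
      calc c ^ (c * f0x) / Real.Gamma (c * f0x) * θ' ^ (c * f0x - 1) * Real.exp (-c * θ') *
            (θ' ^ A * Real.exp (-B * θ'))
          = c ^ (c * f0x) / Real.Gamma (c * f0x) *
              (θ' ^ (c * f0x - 1) * θ' ^ A * (Real.exp (-c * θ') * Real.exp (-B * θ'))) := by
            ring
        _ = c ^ (c * f0x) / Real.Gamma (c * f0x) *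
              (θ' ^ (c * f0x + A - 1) * Real.exp (-(c + B) * θ')) := by rw [e1, e2]
        _ = c ^ (c * f0x) / Real.Gamma (c * f0x) *
              (Real.Gamma (c * f0x + A) / (c + B) ^ (c * f0x + A)) *
              ((c + B) ^ (c * f0x + A) / Real.Gamma (c * f0x + A) * θ' ^ (c * f0x + A - 1) *
                Real.exp (-(c + B) * θ')) := by
            rw [show c ^ (c * f0x) / Real.Gamma (c * f0x) *
                (Real.Gamma (c * f0x + A) / (c + B) ^ (c * f0x + A)) *
                ((c + B) ^ (c * f0x + A) / Real.Gamma (c * f0x + A) * θ' ^ (c * f0x + A - 1) *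
                  Real.exp (-(c + B) * θ'))
              = (c + B) ^ (c * f0x + A) / Real.Gamma (c * f0x + A) *
                  (Real.Gamma (c * f0x + A) / (c + B) ^ (c * f0x + A)) *
                (c ^ (c * f0x) / Real.Gamma (c * f0x) *
                  (θ' ^ (c * f0x + A - 1) * Real.exp (-(c + B) * θ'))) from by ring,
              hone, one_mul]
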